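/- Failure in the finite: There exist a finite relational signature σ and a first-order sentence φ over σ such that φ is preserved under disjoint unions over the class of all finite σ-structures (i.e., for all finite σ-structures A, B, if A ⊨ φ then A ⊎ B ⊨ φ), but φ is not equivalent over the class of all finite σ-structures to any existential local sentence. -/

import Mathlib

open FirstOrder FirstOrder.Language

universe u v w

namespace Gaifman

/-- Two elements are adjacent in the Gaifman graph of a structure: they are distinct and
occur together in some tuple belonging to some relation. -/
def Adj (L : FirstOrder.Language.{u, u}) (M : Type u) [L.Structure M] (a b : M) : Prop :=
  a ≠ b ∧ ∃ (n : ℕ) (R : L.Relations n) (t : Fin n → M),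
    Structure.RelMap R t ∧ a ∈ Set.range t ∧ b ∈ Set.range t

/-- `CloseLE L M r a b` holds iff the Gaifman distance from `a` to `b` is at most `r`. -/
def CloseLE (L : FirstOrder.Language.{u, u}) (M : Type u) [L.Structure M] :
    ℕ → M → M → Prop
  | 0, a, b => a = b
  | r + 1, a, b => CloseLE L M r a b ∨ ∃ c, CloseLE L M r a c ∧ Adj L M c b

lemma closeLE_self (L : FirstOrder.Language.{u, u}) (M : Type u) [L.Structure M] :
    ∀ (r : ℕ) (a : M), CloseLE L M r a a
  | 0, _ => rfl
  | r + 1, a => Or.inl (closeLE_self L M r a)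

/-- The `r`-neighborhood of a tuple: all elements at Gaifman distance at most `r`
from some component of the tuple. -/
def Ball (L : FirstOrder.Language.{u, u}) {M : Type u} [L.Structure M] {m : ℕ}
    (a : Fin m → M) (r : ℕ) : Set M :=
  {x | ∃ i, CloseLE L M r (a i) x}

lemma self_mem_ball (L : FirstOrder.Language.{u, u}) {M : Type u} [L.Structure M] {m : ℕ}
    (a : Fin m → M) (r : ℕ) (i : Fin m) :
    a i ∈ Ball L a r := ⟨i, closeLE_self L M r (a i)⟩

/-- The substructure induced on a subset of a structure over a relational language. -/
def inducedStructure (L : FirstOrder.Language.{u, u}) [L.IsRelational] {M : Type u}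
    [L.Structure M] (s : Set M) : L.Structure s where
  funMap {n} f _ := isEmptyElim f
  RelMap {n} R t := Structure.RelMap R fun i => (t i : M)

/-- A formula is `r`-local if its truth at a tuple only depends on the induced substructure on
the `r`-neighborhood of the tuple. -/
def IsLocal {L : FirstOrder.Language.{u, u}} [L.IsRelational] (r : ℕ) {m : ℕ}
    (φ : L.Formula (Fin m)) : Prop :=
  ∀ (M : Type u) [L.Structure M] (a : Fin m → M),
    φ.Realize a ↔
      (letI := inducedStructure L (Ball L a r)
       φ.Realize fun i => (⟨a i, self_mem_ball L a r i⟩ : Ball L a r))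

/-- Quantifier rank of a (bounded) formula. -/
def qr {L : FirstOrder.Language.{u, u}} {α : Type v} : ∀ {n : ℕ}, L.BoundedFormula α n → ℕ
  | _, .falsum => 0
  | _, .equal _ _ => 0
  | _, .rel _ _ => 0
  | _, .imp f g => max (qr f) (qr g)
  | _, .all f => qr f + 1

/-- The components of a tuple are at pairwise Gaifman distance greater than `s`. -/
def Far (L : FirstOrder.Language.{u, u}) (M : Type u) [L.Structure M] (s : ℕ) {m : ℕ}
    (a : Fin m → M) : Prop :=
  ∀ i j : Fin m, i ≠ j → ¬ CloseLE L M s (a i) (a j)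

/-- `A ≼_{r,q,k} B` : every sentence `∃ x₁ … x_k, τ` with `τ` an `r`-local formula of
quantifier rank at most `q` that holds in `A` also holds in `B`. -/
def LocLE (L : FirstOrder.Language.{u, u}) [L.IsRelational] (r q k : ℕ) (M N : Type u)
    [L.Structure M] [L.Structure N] : Prop :=
  ∀ τ : L.Formula (Fin k), IsLocal r τ → qr τ ≤ q →
    (∃ a : Fin k → M, τ.Realize a) → ∃ b : Fin k → N, τ.Realize b

/-- The preorder `≼_{r,q,k}` with radius and rank parameters in `ℕ ∪ {∞}`: the intersection
over all finite parameters below the given ones. -/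
def LocLEE (L : FirstOrder.Language.{u, u}) [L.IsRelational] (r q : ℕ∞) (k : ℕ)
    (M N : Type u) [L.Structure M] [L.Structure N] : Prop :=
  ∀ r' q' : ℕ, (r' : ℕ∞) ≤ r → (q' : ℕ∞) ≤ q → LocLE L r' q' k M N

/-- Local elementary embedding. -/
def IsLocalElemEmb (L : FirstOrder.Language.{u, u}) [L.IsRelational] {M N : Type u}
    [L.Structure M] [L.Structure N] (h : M → N) : Prop :=
  ∀ (k r : ℕ) (a : Fin k → M) (φ : L.Formula (Fin k)), IsLocal r φ →
    (φ.Realize a ↔ φ.Realize (h ∘ a))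

/-- Disjoint union of two structures over a relational language. -/
def sumStructure (L : FirstOrder.Language.{u, u}) [L.IsRelational] (M N : Type u)
    [L.Structure M] [L.Structure N] : L.Structure (M ⊕ N) where
  funMap {n} f _ := isEmptyElim f
  RelMap {n} R t :=
    (∃ tm : Fin n → M, t = Sum.inl ∘ tm ∧ Structure.RelMap R tm) ∨
    (∃ tn : Fin n → N, t = Sum.inr ∘ tn ∧ Structure.RelMap R tn)

/-- A bundled `L`-structure. -/
structure Struc (L : FirstOrder.Language.{u, u}) : Type (u + 1) where
  carrier : Type u
  str : L.Structure carrier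

attribute [instance] Struc.str

/-- The `(q,r)`-local type of a tuple. -/
def localType (L : FirstOrder.Language.{u, u}) [L.IsRelational] (r q : ℕ) {M : Type u}
    [L.Structure M] {m : ℕ} (a : Fin m → M) : Set (L.Formula (Fin m)) :=
  {τ | IsLocal r τ ∧ qr τ ≤ q ∧ τ.Realize a}

/-- The collection of `(q,r)`-local types of tuples of at most `k` elements. -/
def Specter (L : FirstOrder.Language.{u, u}) [L.IsRelational] (r q k : ℕ) (M : Type u)
    [L.Structure M] : Set (Σ m : ℕ, Set (L.Formula (Fin m))) :=
  {p | ∃ m, m ≤ k ∧ ∃ a : Fin m → M, p = ⟨m, localType L r q a⟩}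

/-- The data of a basic local sentence
`∃ x₁ … x_k, (⋀_{i ≠ j} d(xᵢ,xⱼ) > 2r ∧ ⋀ᵢ ψ(xᵢ))`. -/
structure BasicLocal (L : FirstOrder.Language.{u, u}) [L.IsRelational] where
  k : ℕ
  r : ℕ
  ψ : L.Formula (Fin 1)
  isLocal : IsLocal r ψ

/-- Truth of a basic local sentence in a structure. -/
def BasicLocal.Holds {L : FirstOrder.Language.{u, u}} [L.IsRelational] (b : BasicLocal L)
    (M : Type u) [L.Structure M] : Prop :=
  ∃ a : Fin b.k → M, Far L M (2 * b.r) a ∧ ∀ i, b.ψ.Realize fun _ => a i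

/-- The data of an asymmetric basic local sentence
`∃ x₁ … x_k, (⋀_{i ≠ j} d(xᵢ,xⱼ) > 2r ∧ ⋀ᵢ ψᵢ(xᵢ))`. -/
structure AsymBasicLocal (L : FirstOrder.Language.{u, u}) [L.IsRelational] where
  k : ℕ
  r : ℕ
  ψ : Fin k → L.Formula (Fin 1)
  isLocal : ∀ i, IsLocal r (ψ i)

/-- Truth of an asymmetric basic local sentence in a structure. -/
def AsymBasicLocal.Holds {L : FirstOrder.Language.{u, u}} [L.IsRelational]
    (d : AsymBasicLocal L) (M : Type u) [L.Structure M] : Prop :=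
  ∃ a : Fin d.k → M, Far L M (2 * d.r) a ∧ ∀ i, (d.ψ i).Realize fun _ => a i

/-- Positive Boolean combinations (conjunction and disjunction only). -/
inductive PosBool (α : Type w) : Type w
  | base : α → PosBool α
  | conj : PosBool α → PosBool α → PosBool α
  | disj : PosBool α → PosBool α → PosBool α

/-- Evaluation of a positive Boolean combination against a truth assignment. -/
def PosBool.Eval {α : Type w} (v : α → Prop) : PosBool α → Prop
  | .base a => v a
  | .conj p q => p.Eval v ∧ q.Eval v
  | .disj p q => p.Eval v ∨ q.Eval v

/-- `φ` is equivalent over the class `C` to an existential local sentence `∃ x⃗, τ(x⃗)`. -/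
def EquivToExistLocal {L : FirstOrder.Language.{u, u}} [L.IsRelational]
    (C : Set (Struc L)) (φ : L.Sentence) : Prop :=
  ∃ (k r : ℕ) (τ : L.Formula (Fin k)), IsLocal r τ ∧
    ∀ S ∈ C, (S.carrier ⊨ φ ↔ ∃ a : Fin k → S.carrier, τ.Realize a)

/-- `A ⊆ᵢ B` : `A` is isomorphic to an induced substructure of `B`. -/
def SubInd {L : FirstOrder.Language.{u, u}} (A B : Struc L) : Prop :=
  Nonempty (A.carrier ↪[L] B.carrier)

/-- A hereditary class: closed under induced substructures. -/
def Hereditary {L : FirstOrder.Language.{u, u}} (C : Set (Struc L)) : Prop :=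
  ∀ B ∈ C, ∀ A : Struc L, SubInd A B → A ∈ C

/-- `φ` is preserved under extensions over `C`. -/
def PreservedUnderExt {L : FirstOrder.Language.{u, u}} (C : Set (Struc L))
    (φ : L.Sentence) : Prop :=
  ∀ A ∈ C, ∀ B ∈ C, A.carrier ⊨ φ → SubInd A B → B.carrier ⊨ φ

/-- `C` is closed under disjoint unions with finite structures. -/
def ClosedUnderDisjointUnions {L : FirstOrder.Language.{u, u}} [L.IsRelational]
    (C : Set (Struc L)) : Prop :=
  ∀ A ∈ C, ∀ B : Struc L, Finite B.carrier →
    (⟨A.carrier ⊕ B.carrier, sumStructure L A.carrier B.carrier⟩ : Struc L) ∈ C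

/-- `Balls(C, r, k)` : the structures isomorphic to an `r`-neighborhood of a tuple of at most
`k` elements of a structure of `C`. -/
def BallsClass {L : FirstOrder.Language.{u, u}} [L.IsRelational] (C : Set (Struc L))
    (r k : ℕ) : Set (Struc L) :=
  {T | ∃ A ∈ C, ∃ m, m ≤ k ∧ ∃ a : Fin m → A.carrier,
    letI := inducedStructure L (Ball L a r)
    Nonempty (T.carrier ≃[L] ↥(Ball L a r))}

/-- A `⊆ᵢ`-minimal model of `φ` in `C`: a model in `C` no proper induced substructure of
which satisfies `φ`. -/
def IsMinimalModel {L : FirstOrder.Language.{u, u}} [L.IsRelational] (C : Set (Struc L))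
    (φ : L.Sentence) (A : Struc L) : Prop :=
  A ∈ C ∧ A.carrier ⊨ φ ∧
    ∀ s : Set A.carrier,
      (letI := inducedStructure L s
       (↥s) ⊨ φ) → s = Set.univ

/-- Preservation under extensions holds over the class `D`: every sentence preserved under
extensions over `D` is equivalent over `D` to an existential sentence. -/
def PresExtHolds {L : FirstOrder.Language.{u, u}} [L.IsRelational]
    (D : Set (Struc L)) : Prop :=
  ∀ φ : L.Sentence, PreservedUnderExt D φ →
    ∃ (n : ℕ) (θ : L.Formula (Fin n)), θ.IsQF ∧
      ∀ S ∈ D, (S.carrier ⊨ φ ↔ ∃ a : Fin n → S.carrier, θ.Realize a)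

end Gaifman

open Gaifman

namespace CE


def myL : FirstOrder.Language.{0,0} :=
  ⟨fun _ => Empty, fun n => match n with | 2 => Unit | _ => Empty⟩

instance myL_rel : myL.IsRelational := fun _ => Empty.instIsEmpty

def rl : myL.Relations 2 := Unit.unit

def tv {n : ℕ} (i : Fin n) : myL.Term (Empty ⊕ Fin n) := Term.var (Sum.inr i)

def eF {n : ℕ} (i j : Fin n) : myL.BoundedFormula Empty n :=
  rl.boundedFormula ![tv i, tv j]

def neF {n : ℕ} (i j : Fin n) : myL.BoundedFormula Empty n :=
  BoundedFormula.not ((tv i).bdEqual (tv j))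

def b1 : myL.Sentence :=
  BoundedFormula.exs ((neF (1 : Fin 3) 2) ⊓ ((eF 1 0) ⊓ (eF 2 0)))

def twoBr : myL.Sentence :=
  BoundedFormula.exs
    ((neF (0 : Fin 6) 1) ⊓ (((neF 2 3) ⊓ ((eF 0 2) ⊓ (eF 0 3))) ⊓
      ((neF 4 5) ⊓ ((eF 1 4) ⊓ (eF 1 5)))))

def noSnk : myL.Sentence :=
  BoundedFormula.all (BoundedFormula.ex (eF (0 : Fin 2) 1))

def b2 : myL.Sentence :=
  BoundedFormula.exs
    ((neF (0 : Fin 6) 1) ⊓ (((neF 2 3) ⊓ ((eF 2 0) ⊓ (eF 3 0))) ⊓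
      ((neF 4 5) ⊓ ((eF 4 1) ⊓ (eF 5 1)))))

def phi : myL.Sentence := b1 ⊓ ((twoBr ⊓ noSnk).imp b2)

section Sem

variable (V : Type) [myL.Structure V]

def Ed (x y : V) : Prop := Structure.RelMap rl ![x, y]

variable {V}

def Mg (y : V) : Prop := ∃ a b : V, a ≠ b ∧ Ed V a y ∧ Ed V b y

def Br (x : V) : Prop := ∃ a b : V, a ≠ b ∧ Ed V x a ∧ Ed V x b

variable (V)

def Sem : Prop :=
  (∃ y : V, Mg y) ∧
    ((∃ x₁ x₂ : V, x₁ ≠ x₂ ∧ Br x₁ ∧ Br x₂) ∧ (∀ x : V, ∃ z, Ed V x z) →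
      ∃ y₁ y₂ : V, y₁ ≠ y₂ ∧ Mg y₁ ∧ Mg y₂)

variable {V}

lemma realize_eF {n : ℕ} {i j : Fin n} {v : Empty → V} {xs : Fin n → V} :
    (eF i j).Realize v xs ↔ Ed V (xs i) (xs j) := by
  have h : (fun k : Fin 2 => Term.realize (Sum.elim v xs) (![tv i, tv j] k)) = ![xs i, xs j] := by
    funext k
    fin_cases k <;> simp [tv]
  rw [eF, BoundedFormula.realize_rel, Ed, h]

lemma realize_neF {n : ℕ} {i j : Fin n} {v : Empty → V} {xs : Fin n → V} :
    (neF i j).Realize v xs ↔ xs i ≠ xs j := by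
  simp [neF, tv]

lemma realize_b1 : V ⊨ b1 ↔ ∃ y : V, Mg y := by
  simp only [b1, Sentence.Realize, BoundedFormula.realize_exs,
    BoundedFormula.realize_inf, realize_eF, realize_neF]
  constructor
  · rintro ⟨xs, h1, h2, h3⟩
    exact ⟨xs 0, xs 1, xs 2, h1, h2, h3⟩
  · rintro ⟨y, a, b, h1, h2, h3⟩
    exact ⟨![y, a, b], by simpa using ⟨h1, h2, h3⟩⟩

lemma realize_twoBr : V ⊨ twoBr ↔ ∃ x₁ x₂ : V, x₁ ≠ x₂ ∧ Br x₁ ∧ Br x₂ := by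
  simp only [twoBr, Sentence.Realize, BoundedFormula.realize_exs,
    BoundedFormula.realize_inf, realize_eF, realize_neF]
  constructor
  · rintro ⟨xs, h1, ⟨h2, h3, h4⟩, h5, h6, h7⟩
    exact ⟨xs 0, xs 1, h1, ⟨xs 2, xs 3, h2, h3, h4⟩, ⟨xs 4, xs 5, h5, h6, h7⟩⟩
  · rintro ⟨x₁, x₂, h1, ⟨a, b, h2, h3, h4⟩, ⟨c, d, h5, h6, h7⟩⟩
    exact ⟨![x₁, x₂, a, b, c, d], by simpa using ⟨h1, ⟨h2, h3, h4⟩, h5, h6, h7⟩⟩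

lemma realize_b2 : V ⊨ b2 ↔ ∃ y₁ y₂ : V, y₁ ≠ y₂ ∧ Mg y₁ ∧ Mg y₂ := by
  simp only [b2, Sentence.Realize, BoundedFormula.realize_exs,
    BoundedFormula.realize_inf, realize_eF, realize_neF]
  constructor
  · rintro ⟨xs, h1, ⟨h2, h3, h4⟩, h5, h6, h7⟩
    exact ⟨xs 0, xs 1, h1, ⟨xs 2, xs 3, h2, h3, h4⟩, ⟨xs 4, xs 5, h5, h6, h7⟩⟩
  · rintro ⟨x₁, x₂, h1, ⟨a, b, h2, h3, h4⟩, ⟨c, d, h5, h6, h7⟩⟩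
    exact ⟨![x₁, x₂, a, b, c, d], by simpa using ⟨h1, ⟨h2, h3, h4⟩, h5, h6, h7⟩⟩

lemma realize_noSnk : V ⊨ noSnk ↔ ∀ x : V, ∃ z, Ed V x z := by
  simp only [noSnk, Sentence.Realize, Formula.Realize, BoundedFormula.realize_all,
    BoundedFormula.realize_ex, realize_eF]
  constructor
  · intro h x
    obtain ⟨z, hz⟩ := h x
    refine ⟨z, ?_⟩
    simpa [Fin.snoc] using hz
  · intro h x
    obtain ⟨z, hz⟩ := h x
    refine ⟨z, ?_⟩
    simpa [Fin.snoc] using hz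

lemma realize_phi : V ⊨ phi ↔ Sem V := by
  have : (V ⊨ phi) ↔ (V ⊨ b1 ∧ ((V ⊨ twoBr ∧ V ⊨ noSnk) → V ⊨ b2)) := by
    simp only [Sentence.Realize, phi, Formula.realize_inf, Formula.realize_imp]
  rw [this, realize_b1, realize_twoBr, realize_noSnk, realize_b2, Sem]

end Sem

theorem law (W : Type) [myL.Structure W] [Finite W]
    (hns : ∀ x : W, ∃ z, Ed W x z) (hb : ∃ x : W, Br x)
    (hnm : ∀ y a b : W, Ed W a y → Ed W b y → a = b) : False := by
  classical
  choose f hf using hns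
  have hinj : Function.Injective f := fun x y hxy => hnm (f x) x y (hf x) (hxy ▸ hf y)
  have hsurj : Function.Surjective f := Finite.surjective_of_injective hinj
  obtain ⟨x₀, c, d, hcd, hc, hd⟩ := hb
  have key : ∀ e : W, Ed W x₀ e → e = f x₀ := by
    intro e he
    obtain ⟨w, hw⟩ := hsurj e
    have : w = x₀ := hnm e w x₀ (hw ▸ hf w) he
    rw [← hw, this]
  exact hcd ((key c hc).trans (key d hd).symm)


section Sum

variable (A B : Type) [myL.Structure A] [myL.Structure B]

lemma sum_rel_iff (x y : A ⊕ B) :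
    (letI := sumStructure myL A B; Ed (A ⊕ B) x y) ↔
      ((∃ a a', x = Sum.inl a ∧ y = Sum.inl a' ∧ Ed A a a') ∨
        (∃ b b', x = Sum.inr b ∧ y = Sum.inr b' ∧ Ed B b b')) := by
  constructor
  · rintro (⟨tm, ht, hr⟩ | ⟨tn, ht, hr⟩)
    · refine Or.inl ⟨tm 0, tm 1, congrFun ht 0, congrFun ht 1, ?_⟩
      have htm : ![tm 0, tm 1] = tm := by
        funext k; fin_cases k <;> rfl
      rw [Ed, htm]; exact hr
    · refine Or.inr ⟨tn 0, tn 1, congrFun ht 0, congrFun ht 1, ?_⟩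
      have htn : ![tn 0, tn 1] = tn := by
        funext k; fin_cases k <;> rfl
      rw [Ed, htn]; exact hr
  · rintro (⟨a, a', rfl, rfl, h⟩ | ⟨b, b', rfl, rfl, h⟩)
    · refine Or.inl ⟨![a, a'], ?_, h⟩
      funext k; fin_cases k <;> rfl
    · refine Or.inr ⟨![b, b'], ?_, h⟩
      funext k; fin_cases k <;> rfl

lemma mg_inl {y : A} (h : Mg y) : (letI := sumStructure myL A B; Mg (Sum.inl y : A ⊕ B)) := by
  obtain ⟨a, b, hne, h1, h2⟩ := h
  exact ⟨Sum.inl a, Sum.inl b, fun hc => hne (Sum.inl.inj hc),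
    (sum_rel_iff A B _ _).2 (Or.inl ⟨a, y, rfl, rfl, h1⟩),
    (sum_rel_iff A B _ _).2 (Or.inl ⟨b, y, rfl, rfl, h2⟩)⟩

lemma mg_inr {y : B} (h : Mg y) : (letI := sumStructure myL A B; Mg (Sum.inr y : A ⊕ B)) := by
  obtain ⟨a, b, hne, h1, h2⟩ := h
  exact ⟨Sum.inr a, Sum.inr b, fun hc => hne (Sum.inr.inj hc),
    (sum_rel_iff A B _ _).2 (Or.inr ⟨a, y, rfl, rfl, h1⟩),
    (sum_rel_iff A B _ _).2 (Or.inr ⟨b, y, rfl, rfl, h2⟩)⟩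

lemma br_sum_inl {x : A} (h : (letI := sumStructure myL A B; Br (Sum.inl x : A ⊕ B))) :
    Br x := by
  obtain ⟨c, d, hne, h1, h2⟩ := h
  rcases (sum_rel_iff A B _ _).1 h1 with ⟨a, a', ha, rfl, he⟩ | ⟨b, b', hb, _, _⟩
  · rcases (sum_rel_iff A B _ _).1 h2 with ⟨a2, a2', ha2, rfl, he2⟩ | ⟨b2, b2', hb2, _, _⟩
    · rw [← Sum.inl.inj ha] at he
      rw [← Sum.inl.inj ha2] at he2
      exact ⟨a', a2', fun hc => hne (hc ▸ rfl), he, he2⟩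
    · exact absurd hb2 (by simp)
  · exact absurd hb (by simp)

lemma br_sum_inr {x : B} (h : (letI := sumStructure myL A B; Br (Sum.inr x : A ⊕ B))) :
    Br x := by
  obtain ⟨c, d, hne, h1, h2⟩ := h
  rcases (sum_rel_iff A B _ _).1 h1 with ⟨a, a', ha, _, _⟩ | ⟨b, b', hb, rfl, he⟩
  · exact absurd ha (by simp)
  · rcases (sum_rel_iff A B _ _).1 h2 with ⟨a2, a2', ha2, _, _⟩ | ⟨b2, b2', hb2, rfl, he2⟩
    · exact absurd ha2 (by simp)
    · rw [← Sum.inr.inj hb] at he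
      rw [← Sum.inr.inj hb2] at he2
      exact ⟨b', b2', fun hc => hne (hc ▸ rfl), he, he2⟩

lemma b_merge_of_branch (hB : Finite B) {x : B} (hbr : Br x)
    (hns : ∀ u : B, ∃ z, Ed B u z) : ∃ y : B, Mg y := by
  classical
  by_contra hno
  push_neg at hno
  refine law B hns ⟨x, hbr⟩ ?_
  intro y a b h1 h2
  by_contra hab
  exact hno y ⟨a, b, hab, h1, h2⟩

theorem preservation (hA : Finite A) (hB : Finite B) (h : A ⊨ phi) :
    (letI := sumStructure myL A B; (A ⊕ B) ⊨ phi) := by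
  letI := sumStructure myL A B
  rw [realize_phi] at h ⊢
  obtain ⟨⟨yA, hyA⟩, himp⟩ := h
  have hMgA : Mg (Sum.inl yA : A ⊕ B) := mg_inl A B hyA
  refine ⟨⟨Sum.inl yA, hMgA⟩, ?_⟩
  rintro ⟨⟨X₁, X₂, hne, hb₁, hb₂⟩, hns⟩
  have hnsA : ∀ x : A, ∃ z, Ed A x z := by
    intro x
    obtain ⟨z, hz⟩ := hns (Sum.inl x)
    rcases (sum_rel_iff A B _ _).1 hz with ⟨a, a', ha, _, he⟩ | ⟨b, b', hb, _, _⟩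
    · exact ⟨a', by rwa [← Sum.inl.inj ha] at he⟩
    · exact absurd hb (by simp)
  have hnsB : ∀ x : B, ∃ z, Ed B x z := by
    intro x
    obtain ⟨z, hz⟩ := hns (Sum.inr x)
    rcases (sum_rel_iff A B _ _).1 hz with ⟨a, a', ha, _, _⟩ | ⟨b, b', hb, _, he⟩
    · exact absurd ha (by simp)
    · exact ⟨b', by rwa [← Sum.inr.inj hb] at he⟩
  have fromB : ∀ x : B, Br x → ∃ y₁ y₂ : A ⊕ B, y₁ ≠ y₂ ∧ Mg y₁ ∧ Mg y₂ := by
    intro x hbx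
    obtain ⟨yB, hyB⟩ := b_merge_of_branch B hB hbx hnsB
    exact ⟨Sum.inl yA, Sum.inr yB, by simp, hMgA, mg_inr A B hyB⟩
  match X₁, X₂, hne, hb₁, hb₂ with
  | Sum.inl x₁, Sum.inl x₂, hne, hb₁, hb₂ =>
    obtain ⟨y₁, y₂, hy, hm₁, hm₂⟩ := himp
      ⟨⟨x₁, x₂, fun hc => hne (hc ▸ rfl), br_sum_inl A B hb₁, br_sum_inl A B hb₂⟩, hnsA⟩
    exact ⟨Sum.inl y₁, Sum.inl y₂, fun hc => hy (Sum.inl.inj hc), mg_inl A B hm₁, mg_inl A B hm₂⟩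
  | Sum.inl x₁, Sum.inr x₂, _, _, hb₂ => exact fromB x₂ (br_sum_inr A B hb₂)
  | Sum.inr x₁, _, _, hb₁, _ => exact fromB x₁ (br_sum_inr A B hb₁)

end Sum

section Toolkit

variable {M : Type} [myL.Structure M]

lemma adj_symm {a b : M} (h : Adj myL M a b) : Adj myL M b a :=
  ⟨h.1.symm, h.2.imp fun n => fun ⟨R, t, h1, h2, h3⟩ => ⟨R, t, h1, h3, h2⟩⟩

lemma closeLE_succ {s : ℕ} {a b : M} (h : CloseLE myL M s a b) : CloseLE myL M (s+1) a b :=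
  Or.inl h

lemma closeLE_mono {s t : ℕ} (hst : s ≤ t) {a b : M} (h : CloseLE myL M s a b) :
    CloseLE myL M t a b := by
  induction t with
  | zero => exact (Nat.le_zero.1 hst) ▸ h
  | succ t ih =>
    rcases Nat.lt_or_ge s (t+1) with hlt | hge
    · exact closeLE_succ (ih (Nat.lt_succ_iff.1 hlt))
    · exact (Nat.le_antisymm hst hge) ▸ h

lemma closeLE_prepend {a b : M} (hab : Adj myL M a b) :
    ∀ {s : ℕ} {c : M}, CloseLE myL M s b c → CloseLE myL M (s+1) a c := by
  intro s
  induction s with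
  | zero => intro c hc; exact Or.inr ⟨a, rfl, hc ▸ hab⟩
  | succ s ih =>
    intro c hc
    rcases hc with hc | ⟨d, hd, hadj⟩
    · exact closeLE_succ (ih hc)
    · exact Or.inr ⟨d, ih hd, hadj⟩

lemma closeLE_symm : ∀ {s : ℕ} {a b : M}, CloseLE myL M s a b → CloseLE myL M s b a := by
  intro s
  induction s with
  | zero => intro a b h; exact h.symm
  | succ s ih =>
    intro a b h
    rcases h with h | ⟨c, hc, hadj⟩
    · exact closeLE_succ (ih h)
    · exact closeLE_prepend (adj_symm hadj) (ih hc)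

end Toolkit

def mkS (V : Type) (E : V → V → Prop) : myL.Structure V where
  funMap := fun {n} f => isEmptyElim f
  RelMap := fun {n} R t =>
    match n, R with
    | 2, _ => E (t 0) (t 1)
    | 0, R => R.elim
    | 1, R => R.elim
    | (_ + 3), R => R.elim

lemma ed_mkS {V : Type} (E : V → V → Prop) (x y : V) :
    (letI := mkS V E; Ed V x y) ↔ E x y := Iff.rfl

lemma adj_mkS {V : Type} (E : V → V → Prop) (x y : V) :
    (letI := mkS V E; Adj myL V x y) ↔ x ≠ y ∧ (E x y ∨ E y x) := by
  letI := mkS V E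
  constructor
  · rintro ⟨hne, n, R, t, hR, ⟨i, hi⟩, ⟨j, hj⟩⟩
    refine ⟨hne, ?_⟩
    match n, R with
    | 0, R => exact Empty.elim R
    | 1, R => exact Empty.elim R
    | (n+3), R => exact Empty.elim R
    | 2, R =>
      have hR' : E (t 0) (t 1) := hR
      fin_cases i <;> fin_cases j
      · exact absurd (hi ▸ hj ▸ rfl) hne
      · exact Or.inl (hi ▸ hj ▸ hR')
      · exact Or.inr (hi ▸ hj ▸ hR')
      · exact absurd (hi ▸ hj ▸ rfl) hne
  · rintro ⟨hne, hE | hE⟩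
    · exact ⟨hne, 2, rl, ![x, y], hE, ⟨0, rfl⟩, ⟨1, rfl⟩⟩
    · exact ⟨hne, 2, rl, ![y, x], hE, ⟨1, rfl⟩, ⟨0, rfl⟩⟩

section Concrete

variable (k r : ℕ)

abbrev Vt : Type := (Fin (k+3)) ⊕ ((Fin (k+2)) × Fin (r+2))

variable {k r}

def wpt (m : Fin (k+3)) : Vt k r := Sum.inl m

def arm (a : Fin (k+2)) (p : Fin (r+2)) : Vt k r := Sum.inr (a, p)

variable (k r)

def vix : Fin (k+3) := Fin.last (k+2)

lemma vix_ne_zero : vix k ≠ 0 := by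
  simp [vix, Fin.ext_iff]

def Er0 : Vt k r → Vt k r → Prop
  | Sum.inl m, Sum.inl m' => m' = m
  | Sum.inl m, Sum.inr (a, p) => m = 0 ∧ a = 0 ∧ p = 0
  | Sum.inr (a, p), Sum.inr (a', p') => a' = a ∧ p'.val = p.val + 1
  | Sum.inr (_, p), Sum.inl m' => p.val = r + 1 ∧ m' = vix k

def Er1 (m₀ : Fin (k+3)) (i₀ : Fin (k+2)) (x y : Vt k r) : Prop :=
  Er0 k r x y ∨ (x = wpt m₀ ∧ y = arm i₀ 0)

def S0 : myL.Structure (Vt k r) := mkS _ (Er0 k r)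

def S1 (m₀ : Fin (k+3)) (i₀ : Fin (k+2)) : myL.Structure (Vt k r) :=
  mkS _ (Er1 k r m₀ i₀)

variable {k r}

/-- Every vertex has an `Er0`-successor. -/
lemma er0_noSnk (x : Vt k r) : ∃ z, Er0 k r x z := by
  match x with
  | Sum.inl m => exact ⟨Sum.inl m, rfl⟩
  | Sum.inr (a, p) =>
    rcases Nat.lt_or_ge p.val (r+1) with h | h
    · exact ⟨Sum.inr (a, ⟨p.val + 1, by omega⟩), rfl, rfl⟩
    · have hp : p.val = r+1 := le_antisymm (Nat.lt_succ_iff.1 p.isLt) h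
      exact ⟨Sum.inl (vix k), hp, rfl⟩

/-- Out-neighbors are unique except at `wpt 0`. -/
lemma er0_out_unique {x c d : Vt k r} (hc : Er0 k r x c) (hd : Er0 k r x d)
    (hx : x ≠ wpt 0) : c = d := by
  match x, c, d with
  | Sum.inl m, Sum.inl c, Sum.inl d => rw [show c = m from hc, show d = m from hd]
  | Sum.inl m, Sum.inl c, Sum.inr (a,p) => exact absurd (congrArg wpt hd.1) hx
  | Sum.inl m, Sum.inr (a,p), Sum.inl d => exact absurd (congrArg wpt hc.1) hx
  | Sum.inl m, Sum.inr (a,p), Sum.inr (a',p') => exact absurd (congrArg wpt hc.1) hx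
  | Sum.inr (a,p), Sum.inl c, Sum.inl d =>
    rw [show c = vix k from hc.2, show d = vix k from hd.2]
  | Sum.inr (a,p), Sum.inl c, Sum.inr (a',p') =>
    exact absurd hd.2 (by have := p'.isLt; have := hc.1; omega)
  | Sum.inr (a,p), Sum.inr (a',p'), Sum.inl d =>
    exact absurd hc.2 (by have := p'.isLt; have := hd.1; omega)
  | Sum.inr (a,p), Sum.inr (a1,p1), Sum.inr (a2,p2) =>
    rw [show a1 = a from hc.1, show a2 = a from hd.1]
    congr 2
    exact Fin.ext (by rw [hc.2, hd.2])

lemma arm_inj {k r : ℕ} {a a' : Fin (k+2)} {p p' : Fin (r+2)}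
    (h : (arm a p : Vt k r) = arm a' p') : a = a' ∧ p = p' := by
  injection h with h
  exact ⟨congrArg Prod.fst h, congrArg Prod.snd h⟩

lemma wpt_ne_arm {k r : ℕ} (m : Fin (k+3)) (a : Fin (k+2)) (p : Fin (r+2)) :
    (wpt m : Vt k r) ≠ arm a p := by simp [wpt, arm]

/-- Description of in-neighbors for `Er0`. -/
lemma er0_in {k r : ℕ} {e y : Vt k r} (he : Er0 k r e y) :
    (∃ m, y = wpt m ∧ (e = y ∨ e ≠ y ∧ y = wpt (vix k))) ∨
      (∃ a p, y = arm a p ∧ ((a = (0 : Fin (k+2)) ∧ p = 0 ∧ e = wpt 0) ∨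
        (∃ p' : Fin (r+2), p.val = p'.val + 1 ∧ e = arm a p'))) := by
  match e, y with
  | Sum.inl m, Sum.inl m' => exact Or.inl ⟨m', rfl, Or.inl (congrArg wpt he.symm)⟩
  | Sum.inl m, Sum.inr (a, p) =>
    exact Or.inr ⟨a, p, rfl, Or.inl ⟨he.2.1, he.2.2, congrArg wpt he.1⟩⟩
  | Sum.inr (a', p'), Sum.inr (a, p) =>
    refine Or.inr ⟨a, p, rfl, Or.inr ⟨p', he.2, ?_⟩⟩
    rw [he.1]; rfl
  | Sum.inr (a', p'), Sum.inl m' =>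
    exact Or.inl ⟨m', rfl, Or.inr ⟨by simp [wpt, arm], congrArg wpt he.2⟩⟩

/-- In-neighbors are unique except at `wpt (vix k)`, even after adding the extra edge. -/
lemma er1_in_unique {k r : ℕ} {m₀ : Fin (k+3)} {i₀ : Fin (k+2)} (hi₀ : i₀ ≠ 0) {y c d : Vt k r}
    (hc : Er1 k r m₀ i₀ c y) (hd : Er1 k r m₀ i₀ d y) (hy : y ≠ wpt (vix k)) : c = d := by
  have key : ∀ e : Vt k r, Er0 k r e y →
      (e = y ∧ ∃ m, y = wpt m) ∨
        (∃ a p, y = arm a p ∧ ((a = (0 : Fin (k+2)) ∧ p = 0 ∧ e = wpt 0) ∨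
          (∃ p' : Fin (r+2), p.val = p'.val + 1 ∧ e = arm a p'))) := by
    intro e he
    rcases er0_in he with ⟨m, hym, he' | ⟨_, hv⟩⟩ | h
    · exact Or.inl ⟨he', m, hym⟩
    · exact absurd hv hy
    · exact Or.inr h
  rcases hc with hc | ⟨rfl, rfl⟩
  · rcases hd with hd | ⟨rfl, hy0⟩
    · rcases key c hc with ⟨rfl, _⟩ | ⟨a, p, rfl, hcase⟩
      · rcases key d hd with ⟨rfl, _⟩ | ⟨a', p', h, _⟩
        · rfl
        · obtain ⟨m, hym⟩ := ‹∃ m, (c:Vt k r) = wpt m›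
          exact absurd (hym ▸ h) (wpt_ne_arm m a' p')
      · rcases key d hd with ⟨rfl, m, hym⟩ | ⟨a', p', h, hcase'⟩
        · exact absurd hym (by simp [wpt, arm])
        · obtain ⟨rfl, rfl⟩ : a = a' ∧ p = p' := arm_inj h
          rcases hcase with ⟨rfl, rfl, rfl⟩ | ⟨q, hq, rfl⟩
          · rcases hcase' with ⟨_, _, rfl⟩ | ⟨q', hq', rfl⟩
            · rfl
            · exact absurd hq' (by simp)
          · rcases hcase' with ⟨rfl, hp0, rfl⟩ | ⟨q', hq', rfl⟩
            · exact absurd (hp0 ▸ hq) (by simp)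
            · congr 2
              exact Fin.ext (by omega)
    · -- `d` is the new edge source, `y = arm i₀ 0`
      subst hy0
      rcases key c hc with ⟨rfl, m, hym⟩ | ⟨a, p, h, hcase⟩
      · exact absurd hym (by simp [wpt, arm])
      · obtain ⟨rfl, rfl⟩ : i₀ = a ∧ (0 : Fin (r+2)) = p := arm_inj h
        rcases hcase with ⟨h0, _, _⟩ | ⟨q, hq, _⟩
        · exact absurd h0 hi₀
        · exact absurd hq (by simp)
  · rcases hd with hd | ⟨rfl, _⟩
    · rcases key d hd with ⟨rfl, m, hym⟩ | ⟨a, p, h, hcase⟩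
      · exact absurd hym (by simp [wpt, arm])
      · obtain ⟨rfl, rfl⟩ : i₀ = a ∧ (0 : Fin (r+2)) = p := arm_inj h
        rcases hcase with ⟨h0, _, _⟩ | ⟨q, hq, _⟩
        · exact absurd h0 hi₀
        · exact absurd hq (by simp)
    · rfl

end Concrete

section Facts

variable (k r : ℕ)

lemma arm_zero_ne_arm_one :
    (arm 0 ⟨r+1, by omega⟩ : Vt k r) ≠ arm 1 ⟨r+1, by omega⟩ := by
  intro h
  have := (arm_inj h).1
  simp [Fin.ext_iff] at this

lemma sem_S0 : @Sem (Vt k r) (S0 k r) := by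
  constructor
  · refine ⟨wpt (vix k), arm 0 ⟨r+1, by omega⟩, arm 1 ⟨r+1, by omega⟩,
      arm_zero_ne_arm_one k r, ?_, ?_⟩
    · exact (show Er0 k r (arm 0 ⟨r+1, by omega⟩) (wpt (vix k)) from ⟨rfl, rfl⟩)
    · exact (show Er0 k r (arm 1 ⟨r+1, by omega⟩) (wpt (vix k)) from ⟨rfl, rfl⟩)
  · rintro ⟨⟨x₁, x₂, hne, hb₁, hb₂⟩, _⟩
    have key : ∀ x : Vt k r, @Br (Vt k r) (S0 k r) x → x = wpt 0 := by
      rintro x ⟨c, d, hcd, hc, hd⟩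
      by_contra hx
      exact hcd (er0_out_unique hc hd hx)
    exact absurd ((key x₁ hb₁).trans (key x₂ hb₂).symm) hne

lemma sem_S1_false (m₀ : Fin (k+3)) (i₀ : Fin (k+2)) (hm₀ : m₀ ≠ 0) (hi₀ : i₀ ≠ 0) :
    ¬ @Sem (Vt k r) (S1 k r m₀ i₀) := by
  rintro ⟨_, himp⟩
  have br₁ : @Br (Vt k r) (S1 k r m₀ i₀) (wpt 0) :=
    ⟨wpt 0, arm 0 0, wpt_ne_arm _ _ _,
      Or.inl (show Er0 k r (wpt 0) (wpt 0) from rfl),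
      Or.inl (show Er0 k r (wpt 0) (arm 0 0) from ⟨rfl, rfl, rfl⟩)⟩
  have br₂ : @Br (Vt k r) (S1 k r m₀ i₀) (wpt m₀) :=
    ⟨wpt m₀, arm i₀ 0, wpt_ne_arm _ _ _,
      Or.inl (show Er0 k r (wpt m₀) (wpt m₀) from rfl),
      Or.inr ⟨rfl, rfl⟩⟩
  have hne : (wpt 0 : Vt k r) ≠ wpt m₀ := by
    intro h
    exact hm₀ (Sum.inl.inj h).symm
  have hns : ∀ x : Vt k r, ∃ z, @Ed (Vt k r) (S1 k r m₀ i₀) x z := by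
    intro x
    obtain ⟨z, hz⟩ := er0_noSnk x
    exact ⟨z, Or.inl hz⟩
  obtain ⟨y₁, y₂, hy, hm₁, hm₂⟩ := himp ⟨⟨wpt 0, wpt m₀, hne, br₁, br₂⟩, hns⟩
  have key : ∀ y : Vt k r, @Mg (Vt k r) (S1 k r m₀ i₀) y → y = wpt (vix k) := by
    rintro y ⟨c, d, hcd, hc, hd⟩
    by_contra hy'
    exact hcd (er1_in_unique hi₀ hc hd hy')
  exact absurd ((key y₁ hm₁).trans (key y₂ hm₂).symm) hy

lemma er0_wpt_isolated {m : Fin (k+3)} (hm0 : m ≠ 0) (hmv : m ≠ vix k) :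
    ∀ s, ∀ y : Vt k r, @CloseLE myL (Vt k r) (S0 k r) s (wpt m) y → y = wpt m := by
  intro s
  induction s with
  | zero => intro y h; exact h.symm
  | succ s ih =>
    intro y h
    rcases h with h | ⟨c, hc, hadj⟩
    · exact ih y h
    · rw [ih c hc] at hadj
      rcases (adj_mkS (Er0 k r) (wpt m) y).1 hadj with ⟨hne, hE | hE⟩
      · match y, hE with
        | Sum.inl m', hE => exact absurd (congrArg wpt hE).symm hne
        | Sum.inr (a, p), hE => exact absurd hE.1 hm0
      · match y, hE with
        | Sum.inl m', hE => exact absurd (congrArg wpt hE) hne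
        | Sum.inr (a, p), hE => exact absurd hE.2 hmv

lemma er0_arm_prefix {i : Fin (k+2)} (hi : i ≠ 0) :
    ∀ s, s ≤ r → ∀ y : Vt k r, @CloseLE myL (Vt k r) (S0 k r) s (arm i 0) y →
      ∃ p : Fin (r+2), p.val ≤ s ∧ y = arm i p := by
  intro s
  induction s with
  | zero => intro _ y h; exact ⟨0, le_rfl, h.symm⟩
  | succ s ih =>
    intro hs y h
    rcases h with h | ⟨c, hc, hadj⟩
    · obtain ⟨p, hp, hy⟩ := ih (by omega) y h
      exact ⟨p, by omega, hy⟩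
    · obtain ⟨p, hp, rfl⟩ := ih (by omega) c hc
      rcases (adj_mkS (Er0 k r) (arm i p) y).1 hadj with ⟨hne, hE | hE⟩
      · match y, hE with
        | Sum.inl m', hE => exact absurd hE.1 (by omega)
        | Sum.inr (a', p'), hE =>
          refine ⟨p', by have := hE.2; omega, ?_⟩
          rw [hE.1]; rfl
      · match y, hE with
        | Sum.inl m', hE => exact absurd hE.2.1 hi
        | Sum.inr (a', p'), hE =>
          refine ⟨p', by have := hE.2; omega, ?_⟩
          rw [hE.1]; rfl

lemma choose_m₀ (a : Fin k → Vt k r) :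
    ∃ m₀ : Fin (k+3), m₀ ≠ 0 ∧ m₀ ≠ vix k ∧ ∀ j, a j ≠ wpt m₀ := by
  classical
  let g : Fin k → Fin (k+3) := fun j => match a j with
    | Sum.inl m => m
    | Sum.inr _ => 0
  let bad : Finset (Fin (k+3)) := insert 0 (insert (vix k) (Finset.univ.image g))
  have hcard : bad.card < k + 3 := by
    have h1 : bad.card ≤ (Finset.univ.image g).card + 2 :=
      (Finset.card_insert_le _ _).trans
        (Nat.add_le_add_right (Finset.card_insert_le _ _) 1)
    have h2 : (Finset.univ.image g).card ≤ k := by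
      refine (Finset.card_image_le).trans ?_
      simp
    omega
  have hex : ∃ m₀ : Fin (k+3), m₀ ∉ bad := by
    by_contra hall
    push_neg at hall
    have hsub : (Finset.univ : Finset (Fin (k+3))) ⊆ bad := fun x _ => hall x
    have := Finset.card_le_card hsub
    simp at this
    omega
  obtain ⟨m₀, hm₀⟩ := hex
  simp only [bad, Finset.mem_insert, not_or] at hm₀
  refine ⟨m₀, hm₀.1, hm₀.2.1, ?_⟩
  intro j h
  refine hm₀.2.2 ?_
  refine Finset.mem_image.2 ⟨j, Finset.mem_univ j, ?_⟩
  show (match a j with | Sum.inl m => m | Sum.inr _ => 0) = m₀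
  rw [h]; rfl

lemma choose_i₀ (a : Fin k → Vt k r) :
    ∃ i₀ : Fin (k+2), i₀ ≠ 0 ∧ ∀ j (p : Fin (r+2)), a j ≠ arm i₀ p := by
  classical
  let f : Fin k → Fin (k+2) := fun j => match a j with
    | Sum.inl _ => 0
    | Sum.inr (i, _) => i
  let bad : Finset (Fin (k+2)) := insert 0 (Finset.univ.image f)
  have hcard : bad.card < k + 2 := by
    have h1 : bad.card ≤ (Finset.univ.image f).card + 1 := Finset.card_insert_le _ _
    have h2 : (Finset.univ.image f).card ≤ k := by
      refine (Finset.card_image_le).trans ?_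
      simp
    omega
  have hex : ∃ i₀ : Fin (k+2), i₀ ∉ bad := by
    by_contra hall
    push_neg at hall
    have hsub : (Finset.univ : Finset (Fin (k+2))) ⊆ bad := fun x _ => hall x
    have := Finset.card_le_card hsub
    simp at this
    omega
  obtain ⟨i₀, hi₀⟩ := hex
  simp only [bad, Finset.mem_insert, not_or] at hi₀
  refine ⟨i₀, hi₀.1, ?_⟩
  intro j p h
  refine hi₀.2 ?_
  refine Finset.mem_image.2 ⟨j, Finset.mem_univ j, ?_⟩
  show (match a j with | Sum.inl _ => 0 | Sum.inr (i, _) => i) = i₀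
  rw [h]; rfl

end Facts

section Transfer

variable {k r : ℕ} (m₀ : Fin (k+3)) (i₀ : Fin (k+2))

lemma adj_S1_iff (x y : Vt k r) :
    @Adj myL _ (S1 k r m₀ i₀) x y ↔
      (@Adj myL _ (S0 k r) x y ∨
        ((x = wpt m₀ ∧ y = arm i₀ 0) ∨ (x = arm i₀ 0 ∧ y = wpt m₀))) := by
  constructor
  · intro h
    rcases (adj_mkS (Er1 k r m₀ i₀) x y).1 h with ⟨hxy, h1 | h1⟩
    · rcases h1 with h1 | ⟨rfl, rfl⟩
      · exact Or.inl ((adj_mkS (Er0 k r) x y).2 ⟨hxy, Or.inl h1⟩)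
      · exact Or.inr (Or.inl ⟨rfl, rfl⟩)
    · rcases h1 with h1 | ⟨rfl, rfl⟩
      · exact Or.inl ((adj_mkS (Er0 k r) x y).2 ⟨hxy, Or.inr h1⟩)
      · exact Or.inr (Or.inr ⟨rfl, rfl⟩)
  · rintro (h | ⟨rfl, rfl⟩ | ⟨rfl, rfl⟩)
    · obtain ⟨hxy, h1 | h1⟩ := (adj_mkS (Er0 k r) x y).1 h
      · exact (adj_mkS (Er1 k r m₀ i₀) x y).2 ⟨hxy, Or.inl (Or.inl h1)⟩
      · exact (adj_mkS (Er1 k r m₀ i₀) x y).2 ⟨hxy, Or.inr (Or.inl h1)⟩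
    · exact (adj_mkS (Er1 k r m₀ i₀) _ _).2 ⟨wpt_ne_arm _ _ _, Or.inl (Or.inr ⟨rfl, rfl⟩)⟩
    · exact (adj_mkS (Er1 k r m₀ i₀) _ _).2 ⟨(wpt_ne_arm _ _ _).symm, Or.inr (Or.inr ⟨rfl, rfl⟩)⟩

lemma closeLE_S1_iff {z : Vt k r}
    (hu : ¬ @CloseLE myL _ (S0 k r) r z (wpt m₀))
    (hq : ¬ @CloseLE myL _ (S0 k r) r z (arm i₀ 0)) :
    ∀ s, s ≤ r → ∀ x : Vt k r,
      (@CloseLE myL _ (S1 k r m₀ i₀) s z x ↔ @CloseLE myL _ (S0 k r) s z x) := by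
  intro s
  induction s with
  | zero => intro _ x; exact Iff.rfl
  | succ s ih =>
    intro hs x
    constructor
    · rintro (h | ⟨c, hc, hadj⟩)
      · exact Or.inl ((ih (by omega) x).1 h)
      · have hc0 := (ih (by omega) c).1 hc
        rcases (adj_S1_iff m₀ i₀ c x).1 hadj with h | ⟨rfl, rfl⟩ | ⟨rfl, rfl⟩
        · exact Or.inr ⟨c, hc0, h⟩
        · exact absurd (@closeLE_mono (Vt k r) (S0 k r) s r (by omega) z _ hc0) hu
        · exact absurd (@closeLE_mono (Vt k r) (S0 k r) s r (by omega) z _ hc0) hq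
    · rintro (h | ⟨c, hc, hadj⟩)
      · exact Or.inl ((ih (by omega) x).2 h)
      · exact Or.inr ⟨c, (ih (by omega) c).2 hc, (adj_S1_iff m₀ i₀ c x).2 (Or.inl hadj)⟩

lemma ball_S1_eq (a : Fin k → Vt k r)
    (hu : ∀ j, ¬ @CloseLE myL _ (S0 k r) r (a j) (wpt m₀))
    (hq : ∀ j, ¬ @CloseLE myL _ (S0 k r) r (a j) (arm i₀ 0)) :
    @Ball myL (Vt k r) (S1 k r m₀ i₀) k a r = @Ball myL (Vt k r) (S0 k r) k a r := by
  ext x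
  constructor
  · rintro ⟨j, hj⟩
    exact ⟨j, (closeLE_S1_iff m₀ i₀ (hu j) (hq j) r le_rfl x).1 hj⟩
  · rintro ⟨j, hj⟩
    exact ⟨j, (closeLE_S1_iff m₀ i₀ (hu j) (hq j) r le_rfl x).2 hj⟩

lemma transfer {τ : myL.Formula (Fin k)} (hloc : IsLocal r τ) (a : Fin k → Vt k r)
    (hu : ∀ j, ¬ @CloseLE myL _ (S0 k r) r (a j) (wpt m₀))
    (hq : ∀ j, ¬ @CloseLE myL _ (S0 k r) r (a j) (arm i₀ 0))
    (h : @Formula.Realize myL (Vt k r) (S0 k r) (Fin k) τ a) :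
    @Formula.Realize myL (Vt k r) (S1 k r m₀ i₀) (Fin k) τ a := by
  have hball := ball_S1_eq m₀ i₀ a hu hq
  have huB : (wpt m₀ : Vt k r) ∉ @Ball myL (Vt k r) (S0 k r) k a r :=
    fun ⟨j, hj⟩ => hu j hj
  have hqB : (arm i₀ 0 : Vt k r) ∉ @Ball myL (Vt k r) (S0 k r) k a r :=
    fun ⟨j, hj⟩ => hq j hj
  letI I1 : myL.Structure (@Ball myL (Vt k r) (S1 k r m₀ i₀) k a r) :=
    @inducedStructure myL _ (Vt k r) (S1 k r m₀ i₀) _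
  letI I0 : myL.Structure (@Ball myL (Vt k r) (S0 k r) k a r) :=
    @inducedStructure myL _ (Vt k r) (S0 k r) _
  have hrel : ∀ (t : Fin 2 → (@Ball myL (Vt k r) (S1 k r m₀ i₀) k a r)),
      (Er0 k r ((t 0) : Vt k r) ((t 1) : Vt k r) ↔
        Er1 k r m₀ i₀ ((t 0) : Vt k r) ((t 1) : Vt k r)) := by
    intro t
    constructor
    · exact Or.inl
    · rintro (h1 | ⟨h1, _⟩)
      · exact h1
      · exact absurd (hball ▸ (t 0).2 : ((t 0) : Vt k r) ∈ _) (h1 ▸ huB)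
  let g : (@Ball myL (Vt k r) (S1 k r m₀ i₀) k a r) ≃[myL]
      (@Ball myL (Vt k r) (S0 k r) k a r) :=
    { toEquiv := Equiv.setCongr hball
      map_fun' := fun {n} f _ => isEmptyElim f
      map_rel' := fun {n} R t => by
        match n, R with
        | 2, R =>
          show Er0 k r _ _ ↔ Er1 k r m₀ i₀ _ _
          exact hrel t
        | 0, R => exact R.elim
        | 1, R => exact R.elim
        | (n+3), R => exact R.elim }
  rw [@hloc (Vt k r) (S0 k r) a] at h
  rw [@hloc (Vt k r) (S1 k r m₀ i₀) a]
  have hv : (⇑g ∘ fun i => (⟨a i, @self_mem_ball myL (Vt k r) (S1 k r m₀ i₀) k a r i⟩ :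
        (@Ball myL (Vt k r) (S1 k r m₀ i₀) k a r))) =
      fun i => (⟨a i, @self_mem_ball myL (Vt k r) (S0 k r) k a r i⟩ :
        (@Ball myL (Vt k r) (S0 k r) k a r)) := by
    funext i
    exact Subtype.ext rfl
  refine (StrongHomClass.realize_formula g τ).1 ?_
  rw [hv]
  exact h

end Transfer

end CE



/-- **Failure in the finite.** There are a finite relational signature and a first-order
sentence `φ` preserved under disjoint unions over the class of all finite structures which is
not equivalent over the class of all finite structures to any existential local sentence. -/
theorem failure_in_the_finite :
    ∃ (L : FirstOrder.Language.{0, 0}) (rel : L.IsRelational),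
      Finite (Σ n, L.Relations n) ∧
      ∃ φ : L.Sentence,
        letI := rel
        (∀ (A B : Type) [L.Structure A] [L.Structure B], Finite A → Finite B →
            A ⊨ φ → (letI := sumStructure L A B; (A ⊕ B) ⊨ φ)) ∧
        ¬ ∃ (k r : ℕ) (τ : L.Formula (Fin k)), IsLocal r τ ∧
            ∀ (M : Type) [L.Structure M], Finite M →
              (M ⊨ φ ↔ ∃ a : Fin k → M, τ.Realize a) := by
  classical
  refine ⟨CE.myL, CE.myL_rel, ?_, CE.phi, ?_, ?_⟩
  · -- the signature is finite
    have hsub : Subsingleton (Σ n, CE.myL.Relations n) := by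
      constructor
      rintro ⟨n, R⟩ ⟨m, S⟩
      match n, R, m, S with
      | 2, R, 2, S => rfl
      | 0, R, _, _ => exact R.elim
      | 1, R, _, _ => exact R.elim
      | (n+3), R, _, _ => exact R.elim
      | 2, _, 0, S => exact S.elim
      | 2, _, 1, S => exact S.elim
      | 2, _, (m+3), S => exact S.elim
    exact @Finite.of_subsingleton _ hsub
  · -- preservation under disjoint unions over finite structures
    intro A B sA sB hA hB h
    exact CE.preservation A B hA hB h
  · -- not equivalent to an existential local sentence over finite structures
    rintro ⟨k, r, τ, hloc, heq⟩
    have hfin : Finite (CE.Vt k r) := inferInstance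
    have h0 : (letI := CE.S0 k r; (CE.Vt k r) ⊨ CE.phi) :=
      (@CE.realize_phi (CE.Vt k r) (CE.S0 k r)).2 (CE.sem_S0 k r)
    obtain ⟨a, ha⟩ := (@heq (CE.Vt k r) (CE.S0 k r) hfin).1 h0
    obtain ⟨m₀, hm0, hmv, hm⟩ := CE.choose_m₀ k r a
    obtain ⟨i₀, hi0, hi⟩ := CE.choose_i₀ k r a
    have hu : ∀ j, ¬ @CloseLE CE.myL (CE.Vt k r) (CE.S0 k r) r (a j) (CE.wpt m₀) := by
      intro j hcl
      exact hm j (CE.er0_wpt_isolated k r hm0 hmv r (a j)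
        (@CE.closeLE_symm (CE.Vt k r) (CE.S0 k r) r _ _ hcl))
    have hq : ∀ j, ¬ @CloseLE CE.myL (CE.Vt k r) (CE.S0 k r) r (a j) (CE.arm i₀ 0) := by
      intro j hcl
      obtain ⟨p, _, hy⟩ := CE.er0_arm_prefix k r hi0 r le_rfl (a j)
        (@CE.closeLE_symm (CE.Vt k r) (CE.S0 k r) r _ _ hcl)
      exact hi j p hy
    have h1 : @FirstOrder.Language.Formula.Realize CE.myL (CE.Vt k r)
        (CE.S1 k r m₀ i₀) (Fin k) τ a :=
      CE.transfer m₀ i₀ hloc a hu hq ha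
    have h2 : (letI := CE.S1 k r m₀ i₀; (CE.Vt k r) ⊨ CE.phi) :=
      (@heq (CE.Vt k r) (CE.S1 k r m₀ i₀) hfin).2 ⟨a, h1⟩
    exact CE.sem_S1_false k r m₀ i₀ hm0 hi0
      ((@CE.realize_phi (CE.Vt k r) (CE.S1 k r m₀ i₀)).1 h2)
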